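/- Let L be a countable relational language in which every relation symbol has arity at most t, where t ≥ 2. Let M be an ultrahomogeneous L-structure such that Th(M) has quantifier elimination. Suppose that for every ā ∈ Age(M) with |ā| < t, every B ∈ Age(M), and every externally atomic-definable 2-colouring χ of Binom(M,ā), there is a χ-monochromatic copy of B in M. Then M has the externally definable Ramsey property. (Proposition 3.15.) -/

import Mathlib

open FirstOrder FirstOrder.Language CategoryTheory

universe u v w

namespace EDRP

/-- The colouring `χ` of the copies of `A` in `M` (copies identified with embeddings
`A ↪[L] M`) is externally definable by the formulas `φ i`: there are an elementary extension
`N ⪰ M` and a parameter tuple `ē` in `N` such that `χ(f(ā)) = i` iff `N ⊨ φ i (ē, f(ā))`. -/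
def ExtDefinableBy (L : FirstOrder.Language.{u, v}) (M : Type w) [L.Structure M]
    (A : Type w) [L.Structure A]
    {k e : ℕ} (φ : Fin k → L.Formula (Fin e ⊕ A)) (χ : (A ↪[L] M) → Fin k) : Prop :=
  ∃ (N : Bundled.{w} L.Structure) (emb : M ↪ₑ[L] N) (eb : Fin e → N),
    ∀ (f : A ↪[L] M) (i : Fin k),
      χ f = i ↔ (φ i).Realize (Sum.elim eb fun a => emb (f a))

/-- `χ` is an externally definable `k`-colouring of the copies of `A` in `M`. -/
def ExtDefinable (L : FirstOrder.Language.{u, v}) (M : Type w) [L.Structure M]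
    (A : Type w) [L.Structure A] {k : ℕ} (χ : (A ↪[L] M) → Fin k) : Prop :=
  ∃ (e : ℕ) (φ : Fin k → L.Formula (Fin e ⊕ A)), ExtDefinableBy L M A φ χ

/-- The copy of `B` in `M` given by the embedding `g` is `χ`-monochromatic: `χ` is constant
on the copies of `A` lying inside the image of `g`. -/
def MonochromaticOn (L : FirstOrder.Language.{u, v}) (M : Type w) [L.Structure M]
    (A B : Type w) [L.Structure A] [L.Structure B]
    {k : ℕ} (χ : (A ↪[L] M) → Fin k) (g : B ↪[L] M) : Prop :=
  ∀ f₁ f₂ : A ↪[L] M, Set.range (f₁ : A → M) ⊆ Set.range (g : B → M) →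
    Set.range (f₂ : A → M) ⊆ Set.range (g : B → M) → χ f₁ = χ f₂

/-- `M` has the externally definable `ā`-Ramsey property, where `ā` enumerates `A`:
for every `k ≥ 1`, every `B` in the age of `M` and every externally definable `k`-colouring `χ`
of the copies of `A` in `M`, there is a `χ`-monochromatic copy of `B` in `M`. -/
def ExtDefARamsey (L : FirstOrder.Language.{u, v}) (M : Type w) [L.Structure M]
    (A : Type w) [L.Structure A] : Prop :=
  ∀ (k : ℕ), 1 ≤ k → ∀ (B : Type w) [L.Structure B], Finite B → Nonempty (B ↪[L] M) →
    ∀ χ : (A ↪[L] M) → Fin k, ExtDefinable L M A χ →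
      ∃ g : B ↪[L] M, MonochromaticOn L M A B χ g

/-- `M` has the externally definable Ramsey property. -/
def ExtDefRamsey (L : FirstOrder.Language.{u, v}) (M : Type w) [L.Structure M] : Prop :=
  ∀ (A : Type w) [L.Structure A], Finite A → Nonempty (A ↪[L] M) → ExtDefARamsey L M A

/-- The 2-colouring `χ` of the copies of `A` in `M` is externally definable by the single
formula `φ`, where colour `0` corresponds to satisfaction of `φ`. -/
def ExtDefinableBy2 (L : FirstOrder.Language.{u, v}) (M : Type w) [L.Structure M]
    (A : Type w) [L.Structure A] {e : ℕ}
    (φ : L.Formula (Fin e ⊕ A)) (χ : (A ↪[L] M) → Fin 2) : Prop :=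
  ∃ (N : Bundled.{w} L.Structure) (emb : M ↪ₑ[L] N) (eb : Fin e → N),
    ∀ f : A ↪[L] M, χ f = 0 ↔ φ.Realize (Sum.elim eb fun a => emb (f a))

/-- `Th(M)` has quantifier elimination: every formula is equivalent modulo the complete theory
of `M` to a quantifier-free formula. -/
def HasQE (L : FirstOrder.Language.{u, v}) (M : Type w) [L.Structure M] : Prop :=
  ∀ (n : ℕ) (φ : L.Formula (Fin n)), ∃ ψ : L.Formula (Fin n),
    ψ.IsQF ∧ FirstOrder.Language.Theory.Iff (L.completeTheory M) φ ψ


section Aux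

variable {L : FirstOrder.Language.{u, v}}

def setSub [L.IsRelational] {M : Type*} [L.Structure M] (X : Set M) : L.Substructure M :=
  ⟨X, fun {_} f => isEmptyElim f⟩

@[simp] lemma mem_setSub [L.IsRelational] {M : Type*} [L.Structure M] {X : Set M} {x : M} :
    x ∈ setSub (L := L) X ↔ x ∈ X := Iff.rfl

lemma setSub_fg [L.IsRelational] {M : Type*} [L.Structure M] (X : Set M) (hX : X.Finite) :
    (setSub (L := L) X).FG := by
  rw [Substructure.fg_def]
  refine ⟨X, hX, le_antisymm ?_ ?_⟩
  · rw [Substructure.closure_le]; exact le_refl X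
  · exact fun x hx => Substructure.subset_closure hx

def ConstOn {M : Type w} [L.Structure M] {e : ℕ} {A' : Type w} [L.Structure A']
    (θ : L.Formula (Fin e ⊕ A')) (N : Type w) [L.Structure N] (embf : M → N)
    (eb : Fin e → N) (X : Set M) : Prop :=
  ∀ f₁ f₂ : A' ↪[L] M, Set.range ⇑f₁ ⊆ X → Set.range ⇑f₂ ⊆ X →
    (θ.Realize (Sum.elim eb (embf ∘ ⇑f₁)) ↔ θ.Realize (Sum.elim eb (embf ∘ ⇑f₂)))

/-- A finitary relative-Ramsey witness for the colouring scheme `θ` on copies of `A'`,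
with target `T`: a finite `B₀` in the age of `M` such that inside EVERY copy of `B₀` in `M`
and for EVERY external parameter choice there is a copy of `T` on whose `A'`-copies the value
of `θ` is constant. -/
def GoodW [L.IsRelational] (M : Type w) [L.Structure M] {e : ℕ} (A' : Type w) [L.Structure A']
    (θ : L.Formula (Fin e ⊕ A')) (T : Type w) [L.Structure T] : Prop :=
  ∃ (B₀ : Bundled.{w} L.Structure), Finite B₀ ∧ Nonempty (B₀ ↪[L] M) ∧
    ∀ (gB : B₀ ↪[L] M) (N : Bundled.{w} L.Structure) (emb : M ↪ₑ[L] N) (eb : Fin e → N),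
      ∃ gT : T ↪[L] M, Set.range ⇑gT ⊆ Set.range ⇑gB ∧
        ConstOn θ N ⇑emb eb (Set.range ⇑gT)

section Core

variable [L.IsRelational] {t : ℕ} {M : Type w} [L.Structure M]

lemma core_single
    (hM : L.IsUltrahomogeneous M)
    (h : ∀ (A : Type w) [L.Structure A], Finite A → Nat.card A < t → Nonempty (A ↪[L] M) →
      ∀ (B : Type w) [L.Structure B], Finite B → Nonempty (B ↪[L] M) →
        ∀ χ : (A ↪[L] M) → Fin 2,
          (∃ (e : ℕ) (φ : L.Formula (Fin e ⊕ A)), φ.IsAtomic ∧ ExtDefinableBy2 L M A φ χ) →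
            ∃ g : B ↪[L] M, MonochromaticOn L M A B χ g)
    {e : ℕ} {A' : Type w} [L.Structure A'] (finA : Finite A') (cardA : Nat.card A' < t)
    (neA : Nonempty (A' ↪[L] M)) (θ : L.Formula (Fin e ⊕ A')) (hθ : θ.IsAtomic)
    (T : Type w) [L.Structure T] (finT : Finite T) (neT : Nonempty (T ↪[L] M)) :
    GoodW M A' θ T := by
  classical
  rcases isEmpty_or_nonempty M with hME | hMne
  · refine ⟨⟨T, inferInstance⟩, finT, neT, ?_⟩
    intro gB N emb eb
    obtain ⟨gT⟩ := neT
    refine ⟨gT, ?_, ?_⟩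
    · intro x hx
      exact (hME.elim x)
    · intro f₁ f₂ _ _
      have hf : f₁ = f₂ := DFunLike.ext _ _ (fun a => (hME.elim (f₁ a)))
      rw [hf]
  by_contra hcon
  rw [GoodW] at hcon
  push_neg at hcon
  -- Step 1: for every finite substructure of M, a "bad" external parameter choice,
  -- transported to the identity placement by ultrahomogeneity.
  have hbadX : ∀ X : Finset M, ∃ (N : Bundled.{w} L.Structure) (emb : M ↪ₑ[L] N)
      (eb : Fin e → N), ∀ gT : T ↪[L] M, Set.range ⇑gT ⊆ (↑X : Set M) →
        ¬ ConstOn θ N ⇑emb eb (Set.range ⇑gT) := by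
    intro X
    let BX : Bundled.{w} L.Structure := ⟨↥(setSub (L := L) (↑X : Set M)), inferInstance⟩
    have finB : Finite BX :=
      Finite.of_injective (fun y : ↥(setSub (L := L) (↑X : Set M)) =>
          (⟨y.1, y.2⟩ : ↥(↑X : Set M)))
        (fun y z hyz => Subtype.ext (congrArg Subtype.val hyz))
    have neB : Nonempty (BX ↪[L] M) := ⟨(setSub (L := L) (↑X : Set M)).subtype⟩
    obtain ⟨gB, N, emb, eb, hbad⟩ := hcon BX finB neB
    obtain ⟨σ, hσ⟩ := hM (setSub (L := L) (↑X : Set M)) (setSub_fg _ X.finite_toSet) gB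
    refine ⟨N, emb.comp σ.toElementaryEmbedding, eb, ?_⟩
    intro gT hgT hC
    have hrange : Set.range ⇑(σ.toEmbedding.comp gT) ⊆ Set.range ⇑gB := by
      rw [hσ]
      intro x hx
      obtain ⟨b, rfl⟩ := hx
      have hb : gT b ∈ (↑X : Set M) := hgT (Set.mem_range_self b)
      exact ⟨⟨gT b, hb⟩, rfl⟩
    have := hbad (σ.toEmbedding.comp gT) hrange
    apply this
    intro f₁ f₂ h₁ h₂
    have hr : ∀ (f : A' ↪[L] M), Set.range ⇑f ⊆ Set.range ⇑(σ.toEmbedding.comp gT) →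
        Set.range ⇑(σ.symm.toEmbedding.comp f) ⊆ Set.range ⇑gT := by
      intro f hf x hx
      obtain ⟨a, rfl⟩ := hx
      obtain ⟨b, hb⟩ := hf (Set.mem_range_self a)
      refine ⟨b, ?_⟩
      have hh : σ.symm (σ (gT b)) = σ.symm (f a) := congrArg σ.symm hb
      rw [σ.symm_apply_apply] at hh
      simp only [Embedding.comp_apply, FirstOrder.Language.Equiv.coe_toEmbedding]
      exact hh
    have hiff := hC (σ.symm.toEmbedding.comp f₁) (σ.symm.toEmbedding.comp f₂)
      (hr f₁ h₁) (hr f₂ h₂)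
    have hcomp : ∀ (f : A' ↪[L] M),
        (⇑(emb.comp σ.toElementaryEmbedding) ∘ ⇑(σ.symm.toEmbedding.comp f)) = ⇑emb ∘ ⇑f := by
      intro f
      funext a
      simp only [Function.comp_apply, ElementaryEmbedding.comp_apply, Embedding.comp_apply,
        FirstOrder.Language.Equiv.coe_toElementaryEmbedding, FirstOrder.Language.Equiv.coe_toEmbedding]
      exact congrArg emb (σ.apply_symm_apply (f a))
    rw [hcomp f₁, hcomp f₂] at hiff
    exact hiff
  choose Ns embs ebs hbads using hbadX
  haveI hNsne : ∀ X : Finset M, Nonempty (Ns X) := fun X => ⟨embs X hMne.some⟩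
  -- Step 2: an ultrafilter concentrating on large finite substructures.
  let F : Filter (Finset M) := ⨅ X : Finset M, Filter.principal {Y : Finset M | X ⊆ Y}
  have hFne : F.NeBot := by
    refine Filter.iInf_neBot_of_directed ?_ ?_
    · intro X₁ X₂
      refine ⟨X₁ ∪ X₂, ?_, ?_⟩
      · exact Filter.principal_mono.2 (fun Y hY => (Finset.union_subset_iff.1 hY).1)
      · exact Filter.principal_mono.2 (fun Y hY => (Finset.union_subset_iff.1 hY).2)
    · intro X
      exact Filter.principal_neBot_iff.2 ⟨X, subset_refl X⟩
  haveI := hFne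
  let 𝒰 : Ultrafilter (Finset M) := Ultrafilter.of F
  have hcone : ∀ X : Finset M, {Y : Finset M | X ⊆ Y} ∈ (𝒰 : Filter (Finset M)) := by
    intro X
    exact (Ultrafilter.of_le F) (Filter.mem_iInf_of_mem X (Filter.mem_principal_self _))
  -- Step 3: the ultraproduct of the bad parameter structures.
  let Nf : Finset M → Type w := fun X => (Ns X)
  let NP : Type w := (𝒰 : Filter (Finset M)).Product Nf
  -- the limit elementary embedding
  have hmapf : ∀ {n : ℕ} (φ : L.Formula (Fin n)) (x : Fin n → M),
      (φ.Realize (fun k => ((fun X => embs X (x k) : ∀ X, Nf X) :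
        (𝒰 : Filter (Finset M)).Product Nf)) ↔ φ.Realize x) := by
    intro n φ x
    refine Iff.trans (Ultraproduct.realize_formula_cast φ _) ?_
    have hpt : ∀ X : Finset M, ((φ.Realize fun k => embs X (x k)) ↔ φ.Realize x) :=
      fun X => (embs X).map_formula φ x
    rw [Filter.eventually_congr (Filter.Eventually.of_forall hpt)]
    exact Filter.eventually_const
  let embP : M ↪ₑ[L] NP :=
    ⟨fun a => ((fun X => embs X a : ∀ X, Nf X) : (𝒰 : Filter (Finset M)).Product Nf),
      fun {n} φ x => hmapf φ x⟩
  let ebP : Fin e → NP := fun j =>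
    ((fun X => ebs X j : ∀ X, Nf X) : (𝒰 : Filter (Finset M)).Product Nf)
  -- Łoś's theorem for the colouring formula
  have hLos : ∀ f : A' ↪[L] M, ((θ.Realize (Sum.elim ebP (⇑embP ∘ ⇑f))) ↔
      ∀ᶠ X in (𝒰 : Filter (Finset M)), θ.Realize (Sum.elim (ebs X) (⇑(embs X) ∘ ⇑f))) := by
    intro f
    have hass : (Sum.elim ebP (⇑embP ∘ ⇑f) : (Fin e ⊕ A') → NP)
        = fun y => ((fun X => Sum.elim (ebs X) (⇑(embs X) ∘ ⇑f) y : ∀ X, Nf X) :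
            (𝒰 : Filter (Finset M)).Product Nf) := by
      funext y
      rcases y with j | a
      · rfl
      · rfl
    rw [hass]
    exact Ultraproduct.realize_formula_cast θ _
  -- the external atomic colouring given by the limit parameters
  let χ : (A' ↪[L] M) → Fin 2 := fun f =>
    if θ.Realize (Sum.elim ebP (⇑embP ∘ ⇑f)) then 0 else 1
  have hχdef : ∀ f : A' ↪[L] M, (χ f = 0 ↔ θ.Realize (Sum.elim ebP (⇑embP ∘ ⇑f))) := by
    intro f
    by_cases hv : θ.Realize (Sum.elim ebP (⇑embP ∘ ⇑f))
    · simp [χ, hv]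
    · simp [χ, hv]
  have hdef : ∃ (e' : ℕ) (φ : L.Formula (Fin e' ⊕ A')), φ.IsAtomic ∧ ExtDefinableBy2 L M A' φ χ := by
    refine ⟨e, θ, hθ, ⟨⟨NP, inferInstance⟩, embP, ebP, ?_⟩⟩
    intro f
    exact hχdef f
  obtain ⟨gT, hmono⟩ := h A' finA cardA neA T finT neT χ hdef
  haveI := finT
  -- the copies of A' inside the monochromatic copy of T form a finite set
  have hrfin : (Set.range ⇑gT).Finite := Set.finite_range ⇑gT
  let X₀ : Finset M := hrfin.toFinset
  let E : Set (A' ↪[L] M) := {f | Set.range ⇑f ⊆ Set.range ⇑gT}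
  haveI hEfin : Finite ↥E := by
    haveI := finA
    haveI : Finite ↥(Set.range ⇑gT) := hrfin.to_subtype
    refine Finite.of_injective (fun f : ↥E => (fun a => (⟨f.1 a, f.2 (Set.mem_range_self a)⟩ :
      ↥(Set.range ⇑gT)) : A' → ↥(Set.range ⇑gT))) ?_
    intro f g hfg
    apply Subtype.ext
    apply DFunLike.ext
    intro a
    have := congrFun hfg a
    exact congrArg Subtype.val this
  -- on a large set of indices, the bad colourings agree with the limit colouring on E
  have hagree : ∀ f₁ f₂ : ↥E,
      {X : Finset M | (θ.Realize (Sum.elim (ebs X) (⇑(embs X) ∘ ⇑(f₁ : A' ↪[L] M))) ↔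
        θ.Realize (Sum.elim (ebs X) (⇑(embs X) ∘ ⇑(f₂ : A' ↪[L] M))))} ∈ (𝒰 : Filter (Finset M)) := by
    intro f₁ f₂
    have hχeq : χ f₁.1 = χ f₂.1 := hmono f₁.1 f₂.1 f₁.2 f₂.2
    by_cases hv : θ.Realize (Sum.elim ebP (⇑embP ∘ ⇑(f₁ : A' ↪[L] M)))
    · have hv2 : θ.Realize (Sum.elim ebP (⇑embP ∘ ⇑(f₂ : A' ↪[L] M))) := by
        rw [← hχdef]
        rw [← hχeq]
        rw [hχdef]
        exact hv
      filter_upwards [(hLos f₁.1).1 hv, (hLos f₂.1).1 hv2] with X hX1 hX2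
      exact iff_of_true hX1 hX2
    · have hv2 : ¬ θ.Realize (Sum.elim ebP (⇑embP ∘ ⇑(f₂ : A' ↪[L] M))) := by
        rw [← hχdef] at hv ⊢
        rw [← hχeq]
        exact hv
      rw [hLos f₁.1] at hv
      rw [hLos f₂.1] at hv2
      rw [← Ultrafilter.eventually_not] at hv hv2
      filter_upwards [hv, hv2] with X hX1 hX2
      exact iff_of_false hX1 hX2
  have hint : (⋂ (f₁ : ↥E) (f₂ : ↥E),
      {X : Finset M | (θ.Realize (Sum.elim (ebs X) (⇑(embs X) ∘ ⇑(f₁ : A' ↪[L] M))) ↔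
        θ.Realize (Sum.elim (ebs X) (⇑(embs X) ∘ ⇑(f₂ : A' ↪[L] M))))}) ∈ (𝒰 : Filter (Finset M)) := by
    rw [Filter.iInter_mem]
    intro f₁
    rw [Filter.iInter_mem]
    intro f₂
    exact hagree f₁ f₂
  obtain ⟨X, hX1, hX2⟩ := Filter.nonempty_of_mem (Filter.inter_mem (hcone X₀) hint)
  -- derive the contradiction at index X
  refine hbads X gT ?_ ?_
  · intro x hx
    have hx0 : x ∈ (↑X₀ : Set M) := by
      simp only [X₀, Set.Finite.coe_toFinset]
      exact hx
    exact hX1 hx0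
  · intro f₁ f₂ h₁ h₂
    have hmem := hX2
    simp only [Set.mem_iInter] at hmem
    exact hmem ⟨f₁, h₁⟩ ⟨f₂, h₂⟩

/-- A package: a small shape together with an atomic colouring scheme on it. -/
structure Pkg (L : FirstOrder.Language.{u, v}) (M : Type w) [L.Structure M] (t e : ℕ) where
  A' : Bundled.{w} L.Structure
  fin : Finite A'
  card : Nat.card A' < t
  ne : Nonempty (A' ↪[L] M)
  θ : L.Formula (Fin e ⊕ A')
  atom : θ.IsAtomic

lemma core_chain
    (hM : L.IsUltrahomogeneous M)
    (h : ∀ (A : Type w) [L.Structure A], Finite A → Nat.card A < t → Nonempty (A ↪[L] M) →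
      ∀ (B : Type w) [L.Structure B], Finite B → Nonempty (B ↪[L] M) →
        ∀ χ : (A ↪[L] M) → Fin 2,
          (∃ (e' : ℕ) (φ : L.Formula (Fin e' ⊕ A)), φ.IsAtomic ∧ ExtDefinableBy2 L M A φ χ) →
            ∃ g : B ↪[L] M, MonochromaticOn L M A B χ g)
    {e : ℕ} (l : List (Pkg L M t e)) :
    ∀ (B : Type w) [L.Structure B], Finite B → Nonempty (B ↪[L] M) →
      ∃ (B₀ : Bundled.{w} L.Structure), Finite B₀ ∧ Nonempty (B₀ ↪[L] M) ∧
        ∀ (gB : B₀ ↪[L] M) (N : Bundled.{w} L.Structure) (emb : M ↪ₑ[L] N) (eb : Fin e → N),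
          ∃ g : B ↪[L] M, Set.range ⇑g ⊆ Set.range ⇑gB ∧
            ∀ p ∈ l, ConstOn p.θ N ⇑emb eb (Set.range ⇑g) := by
  induction l with
  | nil =>
    intro B iB finB neB
    exact ⟨⟨B, inferInstance⟩, finB, neB, fun gB N emb eb =>
      ⟨gB, subset_refl _, fun p hp => absurd hp List.not_mem_nil⟩⟩
  | cons p rest ih =>
    intro B iB finB neB
    obtain ⟨B₁, finB₁, neB₁, hB₁⟩ := ih B finB neB
    haveI := p.fin
    obtain ⟨B₀, finB₀, neB₀, hB₀⟩ :=
      core_single hM h p.fin p.card p.ne p.θ p.atom B₁ finB₁ neB₁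
    refine ⟨B₀, finB₀, neB₀, ?_⟩
    intro gB N emb eb
    obtain ⟨g₁, hr₁, hc₁⟩ := hB₀ gB N emb eb
    obtain ⟨g, hr, hc⟩ := hB₁ g₁ N emb eb
    refine ⟨g, subset_trans hr hr₁, ?_⟩
    intro q hq
    rcases List.mem_cons.1 hq with rfl | hq'
    · intro f₁ f₂ h₁ h₂
      exact hc₁ f₁ f₂ (h₁.trans hr) (h₂.trans hr)
    · exact hc q hq'

end Core

section Syn

variable [L.IsRelational]

lemma term_eq_var' [L.IsRelational] {γ : Type*} : ∀ t : L.Term γ, ∃ i, t = Term.var i := by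
  intro t
  cases t with
  | var i => exact ⟨i, rfl⟩
  | func f _ => exact isEmptyElim f

variable [L.IsRelational] {t : ℕ}

lemma singleton_card_lt (ht : 2 ≤ t) {A : Type w} [L.Structure A] (a : A) :
    Nat.card (setSub (L := L) ({a} : Set A)) < t := by
  have : Nat.card (setSub (L := L) ({a} : Set A)) = 1 := by
    rw [Nat.card_eq_one_iff_unique]
    refine ⟨⟨fun x y => Subtype.ext ?_⟩, ⟨⟨a, rfl⟩⟩⟩
    have hx := x.2; have hy := y.2
    simp only [mem_setSub, Set.mem_singleton_iff] at hx hy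
    rw [hx, hy]
  omega

lemma atom_classify (ht : 2 ≤ t)
    (harity : ∀ n : ℕ, t < n → IsEmpty (L.Relations n))
    {e : ℕ} {A : Type w} [L.Structure A] [Finite A]
    (θ : L.Formula (Fin e ⊕ A)) (hθ : θ.IsAtomic) :
    (∀ (N : Type w) (_ : L.Structure N) (eb : Fin e → N) (u₁ u₂ : A ↪[L] N),
        (θ.Realize (Sum.elim eb ⇑u₁) ↔ θ.Realize (Sum.elim eb ⇑u₂)))
    ∨ (∃ (S : Set A) (θ' : L.Formula (Fin e ⊕ (setSub (L := L) S))), θ'.IsAtomic ∧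
        Nat.card (setSub (L := L) S) < t ∧
        ∀ (N : Type w) (_ : L.Structure N) (eb : Fin e → N) (w : A → N),
          (θ.Realize (Sum.elim eb w) ↔
            θ'.Realize (Sum.elim eb (w ∘ ⇑(setSub (L := L) S).subtype)))) := by
  classical
  cases hθ with
  | equal t₁ t₂ =>
    obtain ⟨i₁, rfl⟩ := term_eq_var' t₁
    obtain ⟨i₂, rfl⟩ := term_eq_var' t₂
    have hre : ∀ (N : Type w) (_ : L.Structure N) (v : (Fin e ⊕ A) → N),
        (Formula.Realize (L := L) ((Term.var i₁).bdEqual (Term.var i₂)) v ↔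
          (Sum.elim v (default : Fin 0 → N)) i₁ = (Sum.elim v default) i₂) := by
      intro N _ v
      rw [Formula.Realize, BoundedFormula.realize_bdEqual]
      simp only [Term.realize_var]
    obtain (⟨j₁⟩ | ⟨a₁⟩) := i₁
    case inr => exact isEmptyElim a₁
    case inl =>
    obtain (⟨j₂⟩ | ⟨a₂⟩) := i₂
    case inr => exact isEmptyElim a₂
    case inl =>
    obtain (j₁ | a₁) := j₁ <;> obtain (j₂ | a₂) := j₂
    · left
      intro N iN eb u₁ u₂
      rw [hre N iN, hre N iN]
      exact Iff.rfl
    · right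
      refine ⟨{a₂}, (Term.var (Sum.inl (Sum.inl j₁))).bdEqual
        (Term.var (Sum.inl (Sum.inr ⟨a₂, rfl⟩))), BoundedFormula.IsAtomic.equal _ _,
        singleton_card_lt ht a₂, ?_⟩
      intro N iN eb w
      rw [hre N iN, Formula.Realize, BoundedFormula.realize_bdEqual]
      simp only [Term.realize_var, Sum.elim_inl, Sum.elim_inr, Function.comp_apply]
      exact Iff.rfl
    · right
      refine ⟨{a₁}, (Term.var (Sum.inl (Sum.inr ⟨a₁, rfl⟩))).bdEqual
        (Term.var (Sum.inl (Sum.inl j₂))), BoundedFormula.IsAtomic.equal _ _,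
        singleton_card_lt ht a₁, ?_⟩
      intro N iN eb w
      rw [hre N iN, Formula.Realize, BoundedFormula.realize_bdEqual]
      simp only [Term.realize_var, Sum.elim_inl, Sum.elim_inr, Function.comp_apply]
      exact Iff.rfl
    · left
      intro N iN eb u₁ u₂
      rw [hre N iN, hre N iN]
      exact ⟨fun hh => congrArg (fun z => ⇑u₂ z) (u₁.injective hh),
        fun hh => congrArg (fun z => ⇑u₁ z) (u₂.injective hh)⟩
  | @rel l R ts =>
    have hl : l ≤ t := by
      by_contra hc
      exact (harity l (lt_of_not_ge hc)).false R
    choose p hp using fun i => term_eq_var' (ts i)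
    set q : Fin l → Fin e ⊕ A := fun i => Sum.elim id (fun x => Fin.elim0 x) (p i) with hq
    have hqv : ∀ (N : Type w) (_ : L.Structure N) (v : (Fin e ⊕ A) → N) (i : Fin l),
        (ts i).realize (Sum.elim v (default : Fin 0 → N)) = v (q i) := by
      intro N iN v i
      rw [hp i]
      simp only [Term.realize_var, hq]
      rcases hpx : p i with g | x
      · simp only [hpx, Sum.elim_inl, id]
      · exact isEmptyElim x
    have hre : ∀ (N : Type w) (_ : L.Structure N) (v : (Fin e ⊕ A) → N),
        (Formula.Realize (L := L) (R.boundedFormula ts) v ↔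
          Structure.RelMap R (fun i => v (q i))) := by
      intro N iN v
      refine Iff.trans (BoundedFormula.realize_rel (R := R) (ts := ts)) ?_
      exact iff_of_eq (congrArg _ (funext fun i => hqv N iN v i))
    by_cases hpar : ∃ i j, q i = Sum.inl j
    · right
      obtain ⟨i₀, j₀, hij⟩ := hpar
      set S : Set A := {a | ∃ i, q i = Sum.inr a} with hS
      set ρ : (Fin e ⊕ A) → (Fin e ⊕ (setSub (L := L) S)) :=
        Sum.elim (fun j => Sum.inl j)
          (fun a => if h : a ∈ S then Sum.inr ⟨a, h⟩ else Sum.inl j₀) with hρ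
      refine ⟨S, BoundedFormula.rel R (fun i => Term.var (Sum.inl (ρ (q i)))),
        BoundedFormula.IsAtomic.rel _ _, ?_, ?_⟩
      · have hwit : ∀ x : (setSub (L := L) S), ∃ i, q i = Sum.inr x.1 := fun x => x.2
        choose wit hwit' using hwit
        have hinj : Function.Injective
            (fun x : (setSub (L := L) S) => (⟨wit x, by
              intro hcon
              have h' := hwit' x
              rw [hcon, hij] at h'
              simp at h'⟩ : {i : Fin l // i ≠ i₀})) := by
          intro x y hxy
          rw [Subtype.mk.injEq] at hxy
          have h2 : q (wit x) = q (wit y) := by rw [hxy]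
          rw [hwit' x, hwit' y] at h2
          exact Subtype.ext (Sum.inr_injective h2)
        have hle : Nat.card (setSub (L := L) S) ≤ Nat.card {i : Fin l // i ≠ i₀} :=
          Nat.card_le_card_of_injective _ hinj
        have hcard : Nat.card {i : Fin l // i ≠ i₀} = l - 1 := by
          rw [Nat.card_eq_fintype_card, Fintype.card_subtype_compl (p := fun i => i = i₀),
            Fintype.card_subtype_eq, Fintype.card_fin]
        have hl0 : 0 < l := Fin.pos i₀
        omega
      · intro N iN eb w
        rw [hre N iN]
        refine Iff.trans (iff_of_eq (congrArg _ (funext fun i => ?_)))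
          (BoundedFormula.realize_rel (R := R)).symm
        simp only [Term.realize_var]
        rcases hqi : q i with j | a
        · simp [hρ]
        · have haS : a ∈ S := ⟨i, hqi⟩
          simp only [hρ, Sum.elim_inl, Sum.elim_inr, dif_pos haS]
          rfl
    · left
      push_neg at hpar
      have hr : ∀ i : Fin l, ∃ a, q i = Sum.inr a := by
        intro i
        rcases hqi : q i with j | a
        · exact absurd hqi (hpar i j)
        · exact ⟨a, rfl⟩
      choose r hr' using hr
      intro N iN eb u₁ u₂
      rw [hre N iN, hre N iN]
      have h1 : ∀ (u : A ↪[L] N),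
          (Structure.RelMap R (fun i => Sum.elim eb ⇑u (q i)) ↔
            Structure.RelMap (M := A) R r) := by
        intro u
        have hfe : (fun i => Sum.elim eb ⇑u (q i)) = ⇑u ∘ r := by
          funext i; rw [hr' i]; rfl
        rw [hfe]
        exact StrongHomClass.map_rel u R r
      rw [h1 u₁, h1 u₂]


end Syn

/-- The list of atomic subformulas of a (quantifier-free) formula. -/
def atomList {γ : Type*} : ∀ {n}, L.BoundedFormula γ n → List (L.BoundedFormula γ n)
  | _, BoundedFormula.imp f g => atomList f ++ atomList g
  | _, BoundedFormula.equal t₁ t₂ => [BoundedFormula.equal t₁ t₂]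
  | _, BoundedFormula.rel R ts => [BoundedFormula.rel R ts]
  | _, _ => []

lemma atomList_atomic {γ : Type*} : ∀ {n} (φ : L.BoundedFormula γ n),
    ∀ α ∈ atomList φ, α.IsAtomic := by
  intro n φ
  induction φ with
  | falsum => intro α hα; simp [atomList] at hα
  | equal t₁ t₂ =>
    intro α hα; simp only [atomList, List.mem_singleton] at hα; subst hα
    exact BoundedFormula.IsAtomic.equal _ _
  | rel R ts =>
    intro α hα; simp only [atomList, List.mem_singleton] at hα; subst hα
    exact BoundedFormula.IsAtomic.rel _ _
  | imp f g ihf ihg =>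
    intro α hα
    simp only [atomList, List.mem_append] at hα
    exact hα.elim (ihf α) (ihg α)
  | all f _ => intro α hα; simp [atomList] at hα

lemma realize_iff_of_atoms {γ : Type*} {N : Type*} [L.Structure N]
    {n : ℕ} {φ : L.BoundedFormula γ n} (h : φ.IsQF)
    {v₁ v₂ : γ → N} {xs₁ xs₂ : Fin n → N}
    (ha : ∀ α ∈ atomList φ, (BoundedFormula.Realize α v₁ xs₁ ↔ BoundedFormula.Realize α v₂ xs₂)) :
    (φ.Realize v₁ xs₁ ↔ φ.Realize v₂ xs₂) := by
  induction h with
  | falsum => exact Iff.rfl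
  | of_isAtomic hA =>
    cases hA with
    | equal t₁ t₂ => exact ha _ (by simp [Term.bdEqual, atomList])
    | rel R ts => exact ha _ (by simp [Relations.boundedFormula, atomList])
  | imp h₁ h₂ ih₁ ih₂ =>
    simp only [BoundedFormula.realize_imp]
    rw [ih₁ (fun α hα => ha α (by simp [atomList, hα])),
      ih₂ (fun α hα => ha α (by simp [atomList, hα]))]



section Assemble

variable [L.IsRelational] {t : ℕ} {M : Type w} [L.Structure M]

lemma pkgs_of_atoms (ht : 2 ≤ t) (harity : ∀ n : ℕ, t < n → IsEmpty (L.Relations n))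
    {e : ℕ} {A : Type w} [L.Structure A] [Finite A] (neA : Nonempty (A ↪[L] M)) :
    ∀ (LL : List (L.Formula (Fin e ⊕ A))), (∀ α ∈ LL, α.IsAtomic) →
      ∃ l : List (Pkg L M t e),
        ∀ (N : Type w) (iN : L.Structure N) (emb : M ↪[L] N) (eb : Fin e → N) (X : Set M),
          (∀ p ∈ l, ConstOn p.θ N ⇑emb eb X) →
            ∀ α ∈ LL, ∀ f₁ f₂ : A ↪[L] M, Set.range ⇑f₁ ⊆ X → Set.range ⇑f₂ ⊆ X →
              (α.Realize (Sum.elim eb (⇑emb ∘ ⇑f₁)) ↔ α.Realize (Sum.elim eb (⇑emb ∘ ⇑f₂))) := by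
  intro LL
  induction LL with
  | nil => exact fun _ => ⟨[], fun N iN emb eb X _ α hα => absurd hα List.not_mem_nil⟩
  | cons α LL' ih =>
    intro hat
    obtain ⟨l', hl'⟩ := ih (fun β hβ => hat β (List.mem_cons_of_mem α hβ))
    rcases atom_classify ht harity α (hat α List.mem_cons_self) with
      hL | ⟨S, θ', hat', hcard, hfac⟩
    · refine ⟨l', ?_⟩
      intro N iN emb eb X hconst β hβ f₁ f₂ h₁ h₂
      rcases List.mem_cons.1 hβ with rfl | hβ'
      · have hc1 : ⇑(emb.comp f₁) = ⇑emb ∘ ⇑f₁ := funext fun x => Embedding.comp_apply _ _ _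
        have hc2 : ⇑(emb.comp f₂) = ⇑emb ∘ ⇑f₂ := funext fun x => Embedding.comp_apply _ _ _
        have hLL := hL N iN eb (emb.comp f₁) (emb.comp f₂)
        rw [hc1, hc2] at hLL
        exact hLL
      · exact hl' N iN emb eb X hconst β hβ' f₁ f₂ h₁ h₂
    · refine ⟨(⟨⟨↥(setSub (L := L) S), inferInstance⟩, inferInstance, hcard,
        ⟨neA.some.comp (setSub (L := L) S).subtype⟩, θ', hat'⟩ : Pkg L M t e) :: l', ?_⟩
      intro N iN emb eb X hconst β hβ f₁ f₂ h₁ h₂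
      rcases List.mem_cons.1 hβ with rfl | hβ'
      · have hra : ∀ f : A ↪[L] M, Set.range ⇑f ⊆ X →
            Set.range ⇑(f.comp (setSub (L := L) S).subtype) ⊆ X := by
          intro f hf x hx
          obtain ⟨s, rfl⟩ := hx
          exact hf ⟨(setSub (L := L) S).subtype s, rfl⟩
        have hc := hconst _ List.mem_cons_self (f₁.comp (setSub (L := L) S).subtype)
          (f₂.comp (setSub (L := L) S).subtype) (hra f₁ h₁) (hra f₂ h₂)
        have hcc : ∀ f : A ↪[L] M,
            (⇑emb ∘ ⇑(f.comp (setSub (L := L) S).subtype))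
              = (⇑emb ∘ ⇑f) ∘ ⇑(setSub (L := L) S).subtype := by
          intro f
          funext x
          simp only [Function.comp_apply, Embedding.comp_apply]
        rw [hcc f₁, hcc f₂] at hc
        rw [hfac N iN eb (⇑emb ∘ ⇑f₁), hfac N iN eb (⇑emb ∘ ⇑f₂)]
        exact hc
      · exact hl' N iN emb eb X (fun p hp => hconst p (List.mem_cons_of_mem _ hp)) β hβ' f₁ f₂ h₁ h₂

end Assemble

end Aux

/-- **Proposition 3.15.** Let `L` have maximum arity `t ≥ 2` and let `M` be ultrahomogeneous
with `Th(M)` having QE. If for every `ā ∈ Age(M)` with `|ā| < t`, every `B ∈ Age(M)` and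
every externally atomic-definable 2-colouring of the copies of `A` in `M` there is a
monochromatic copy of `B`, then `M` has the externally definable Ramsey property. -/
theorem extDefRamsey_of_atomic (L : FirstOrder.Language.{u, v}) [L.IsRelational]
    [Countable L.Symbols] (t : ℕ) (ht : 2 ≤ t)
    (harity : ∀ n : ℕ, t < n → IsEmpty (L.Relations n))
    (M : Type w) [L.Structure M] (hM : L.IsUltrahomogeneous M) (hQE : HasQE L M)
    (h : ∀ (A : Type w) [L.Structure A], Finite A → Nat.card A < t → Nonempty (A ↪[L] M) →
      ∀ (B : Type w) [L.Structure B], Finite B → Nonempty (B ↪[L] M) →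
        ∀ χ : (A ↪[L] M) → Fin 2,
          (∃ (e : ℕ) (φ : L.Formula (Fin e ⊕ A)), φ.IsAtomic ∧ ExtDefinableBy2 L M A φ χ) →
            ∃ g : B ↪[L] M, MonochromaticOn L M A B χ g) :
    ExtDefRamsey L M := by
  classical
  intro A iA finA neA k hk B iB finB neB χ hdef
  haveI := finA; haveI := finB
  rcases isEmpty_or_nonempty A with hAe | hAne
  · obtain ⟨g⟩ := neB
    refine ⟨g, ?_⟩
    intro f₁ f₂ _ _
    have hf : f₁ = f₂ := DFunLike.ext _ _ (fun a => (hAe.elim a))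
    rw [hf]
  obtain ⟨e, φs, N, emb, eb, hpres⟩ := hdef
  haveI hMne : Nonempty M := ⟨neA.some hAne.some⟩
  haveI hNne : Nonempty N := ⟨emb hMne.some⟩
  haveI : (N : Type w) ⊨ L.completeTheory M := (emb.theory_model_iff _).1 inferInstance
  obtain ⟨a, ⟨ea⟩⟩ := Finite.exists_equiv_fin A
  let σ : (Fin e ⊕ A) ≃ Fin (e + a) :=
    (Equiv.sumCongr (Equiv.refl (Fin e)) ea).trans finSumFinEquiv
  choose ψ' hqf hiff using fun i : Fin k => hQE (e + a) ((φs i).relabel ⇑σ)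
  let ψ : Fin k → L.Formula (Fin e ⊕ A) := fun i => (ψ' i).relabel ⇑σ.symm
  have hψqf : ∀ i, (ψ i).IsQF := fun i => (hqf i).relabel _
  have hNiff : ∀ (i : Fin k) (v : (Fin e ⊕ A) → N), ((φs i).Realize v ↔ (ψ i).Realize v) := by
    intro i v
    have h1 : ((φs i).relabel ⇑σ).Realize (v ∘ ⇑σ.symm) ↔ (ψ' i).Realize (v ∘ ⇑σ.symm) :=
      (hiff i).realize_iff
    rw [Formula.realize_relabel] at h1
    have h2 : (v ∘ ⇑σ.symm) ∘ ⇑σ = v := funext fun y => congrArg v (σ.symm_apply_apply y)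
    rw [h2] at h1
    refine h1.trans ?_
    rw [show (ψ i) = (ψ' i).relabel ⇑σ.symm from rfl, Formula.realize_relabel]
  have hχ : ∀ (f : A ↪[L] M) (i : Fin k),
      (χ f = i ↔ (ψ i).Realize (Sum.elim eb (fun x => emb (f x)))) := by
    intro f i
    rw [hpres f i]
    exact hNiff i _
  let LL : List (L.Formula (Fin e ⊕ A)) := (List.finRange k).flatMap fun i => atomList (ψ i)
  have hLat : ∀ α ∈ LL, α.IsAtomic := by
    intro α hα
    obtain ⟨i, _, hmem⟩ := List.mem_flatMap.1 hα
    exact atomList_atomic _ α hmem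
  obtain ⟨l, hl⟩ := pkgs_of_atoms ht harity neA LL hLat
  obtain ⟨B₀, finB₀, neB₀, hB₀⟩ := core_chain hM h l B finB neB
  obtain ⟨gB⟩ := neB₀
  obtain ⟨g, _, hconst⟩ := hB₀ gB N emb eb
  refine ⟨g, ?_⟩
  intro f₁ f₂ h₁ h₂
  have hconst' : ∀ p ∈ l, ConstOn p.θ N ⇑emb.toEmbedding eb (Set.range ⇑g) := by
    intro p hp
    rw [ElementaryEmbedding.coe_toEmbedding]
    exact hconst p hp
  have hinv := hl N inferInstance emb.toEmbedding eb (Set.range ⇑g) hconst'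
  rw [ElementaryEmbedding.coe_toEmbedding] at hinv
  have key : ∀ i : Fin k, ((ψ i).Realize (Sum.elim eb (fun x => emb (f₁ x))) ↔
      (ψ i).Realize (Sum.elim eb (fun x => emb (f₂ x)))) := by
    intro i
    refine realize_iff_of_atoms (hψqf i) ?_
    intro α hα
    exact hinv α (List.mem_flatMap.2 ⟨i, List.mem_finRange i, hα⟩) f₁ f₂ h₁ h₂
  have hr1 := (hχ f₁ (χ f₁)).1 rfl
  have hr2 := (key (χ f₁)).1 hr1
  exact ((hχ f₂ (χ f₁)).2 hr2).symm

end EDRP
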